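/- If a graph G with integer edge weights is Hadamard diagonalizable, then every eigenvalue of its Laplacian matrix L is an even integer. -/
import Mathlib


open Matrix

theorem hadamard_diag_eigenvalues_even (n : ℕ)
    (A : Matrix (Fin n) (Fin n) ℤ) (hAsymm : A.IsSymm) (hAdiag : ∀ i, A i i = 0)
    (L : Matrix (Fin n) (Fin n) ℤ)
    (hL : L = Matrix.diagonal (fun i => ∑ j, A i j) - A)
    (H : Matrix (Fin n) (Fin n) ℝ)
    (hent : ∀ i j, H i j = 1 ∨ H i j = -1)
    (hH : H * Hᵀ = (n : ℝ) • 1)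
    (Λ : Fin n → ℝ)
    (hdiag : L.map (fun x => (x : ℝ)) = ((n : ℝ))⁻¹ • (H * Matrix.diagonal Λ * Hᵀ)) :
    ∀ (μ : ℝ) (v : Fin n → ℝ), v ≠ 0 →
      (L.map (fun x => (x : ℝ))) *ᵥ v = μ • v → ∃ m : ℤ, μ = 2 * m := by
  intro μ v hv hev
  rcases Nat.eq_zero_or_pos n with hn | hn
  · subst hn
    exact absurd (funext fun i => i.elim0) hv
  have hn' : (n : ℝ) ≠ 0 := Nat.cast_ne_zero.mpr hn.ne'
  set Lr := L.map (fun x => (x : ℝ)) with hLr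
  -- Hᵀ * H = n • 1
  have hinv : H * ((n : ℝ)⁻¹ • Hᵀ) = 1 := by
    rw [Matrix.mul_smul, hH, smul_smul, inv_mul_cancel₀ hn', one_smul]
  have hHH : Hᵀ * H = (n : ℝ) • 1 := by
    have h1 : ((n : ℝ)⁻¹ • Hᵀ) * H = 1 := mul_eq_one_comm.mp hinv
    have h2 : (n : ℝ) • (((n : ℝ)⁻¹ • Hᵀ) * H) = (n : ℝ) • (1 : Matrix (Fin n) (Fin n) ℝ) := by
      rw [h1]
    rw [Matrix.smul_mul, smul_smul, mul_inv_cancel₀ hn', one_smul] at h2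
    exact h2
  -- L * H = H * diagonal Λ
  have hLH : Lr * H = H * Matrix.diagonal Λ := by
    rw [hdiag, Matrix.smul_mul, Matrix.mul_assoc (H * Matrix.diagonal Λ) Hᵀ H, hHH,
      Matrix.mul_smul, Matrix.mul_one, smul_smul, inv_mul_cancel₀ hn', one_smul]
  -- row sums of L are 0
  have hrow : ∀ i, (∑ j, L i j) = 0 := by
    intro i
    rw [hL]
    simp [Matrix.sub_apply, Finset.sum_sub_distrib, Matrix.diagonal_apply]
  -- each Λ k is an even integer
  have hΛ : ∀ k, ∃ m : ℤ, Λ k = 2 * m := by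
    intro k
    set i0 : Fin n := ⟨0, hn⟩
    set ε : Fin n → ℤ := fun j => if H j k = 1 then 1 else -1 with hεdef
    have hε : ∀ j, (ε j : ℝ) = H j k := by
      intro j
      rcases hent j k with h | h
      · simp [hεdef, h]
      · have hne : H j k ≠ 1 := by rw [h]; norm_num
        simp only [hεdef, if_neg hne, h, Int.cast_neg, Int.cast_one]
    have hcol : (∑ j, (L i0 j : ℝ) * H j k) = Λ k * H i0 k := by
      have := congrFun (congrFun hLH i0) k
      rw [Matrix.mul_apply, Matrix.mul_diagonal] at this
      simpa [hLr, Matrix.map_apply, mul_comm] using this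
    set S : ℤ := ε i0 * ∑ j, L i0 j * ε j with hSdef
    have hone : H i0 k * H i0 k = 1 := by
      rcases hent i0 k with h | h <;> rw [h] <;> norm_num
    have hSval : (S : ℝ) = Λ k := by
      have : ((∑ j, L i0 j * ε j : ℤ) : ℝ) = Λ k * H i0 k := by
        push_cast
        rw [← hcol]
        exact Finset.sum_congr rfl fun j _ => by rw [hε j]
      calc (S : ℝ) = (ε i0 : ℝ) * ((∑ j, L i0 j * ε j : ℤ) : ℝ) := by
            rw [hSdef, Int.cast_mul]
        _ = H i0 k * (Λ k * H i0 k) := by rw [hε i0, this]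
        _ = Λ k * (H i0 k * H i0 k) := by ring
        _ = Λ k := by rw [hone, mul_one]
    have hεmod : ∀ j, ((ε j : ZMod 2)) = 1 := by
      intro j
      by_cases h : H j k = 1 <;> · simp [hεdef, h]; try decide
    have hSmod : ((S : ZMod 2)) = 0 := by
      have : ((S : ZMod 2)) = ∑ j, ((L i0 j : ZMod 2)) := by
        rw [hSdef, Int.cast_mul, Int.cast_sum, hεmod i0, one_mul]
        exact Finset.sum_congr rfl fun j _ => by rw [Int.cast_mul, hεmod j, mul_one]
      rw [this, ← Int.cast_sum, hrow i0, Int.cast_zero]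
    have hdvd : (2 : ℤ) ∣ S := by
      have := (ZMod.intCast_zmod_eq_zero_iff_dvd S 2).mp hSmod
      exact_mod_cast this
    obtain ⟨m, hm⟩ := hdvd
    exact ⟨m, by rw [← hSval, hm]; push_cast; ring⟩
  -- μ is one of the Λ k
  have hTL : Hᵀ * Lr = Matrix.diagonal Λ * Hᵀ := by
    rw [hdiag, Matrix.mul_smul, ← Matrix.mul_assoc, ← Matrix.mul_assoc, hHH,
      Matrix.smul_mul, Matrix.smul_mul, Matrix.one_mul, smul_smul,
      inv_mul_cancel₀ hn', one_smul]
  set w : Fin n → ℝ := Hᵀ *ᵥ v with hwdef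
  have hw : Matrix.diagonal Λ *ᵥ w = μ • w := by
    have h1 : Hᵀ *ᵥ (Lr *ᵥ v) = Hᵀ *ᵥ (μ • v) := by rw [hev]
    rw [Matrix.mulVec_mulVec, hTL, ← Matrix.mulVec_mulVec, Matrix.mulVec_smul] at h1
    exact h1
  have hwne : w ≠ 0 := by
    intro h0
    apply hv
    have h1 : H *ᵥ w = 0 := by rw [h0, Matrix.mulVec_zero]
    rw [hwdef, Matrix.mulVec_mulVec, hH, Matrix.smul_mulVec, Matrix.one_mulVec] at h1
    exact (smul_eq_zero.mp h1).resolve_left hn'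
  obtain ⟨k, hk⟩ := Function.ne_iff.mp hwne
  have hμ : μ = Λ k := by
    have := congrFun hw k
    rw [Matrix.mulVec_diagonal] at this
    have h2 : Λ k * w k = μ * w k := this
    exact (mul_right_cancel₀ hk h2.symm)
  obtain ⟨m, hm⟩ := hΛ k
  exact ⟨m, by rw [hμ, hm]⟩
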